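/- Let ψ be a nonzero N-partite state. Then supp(ψ) is a singleton if and only if for every tuple t = (t₁, …, t_N), where each tᵢ : Fin (d i) → ℂ satisfies |tᵢ(a)| = 1 for all a and ∏_a tᵢ(a) = 1 (i.e. each tᵢ is the diagonal of a diagonal special unitary matrix), there exists c ∈ ℂ such that (∏ᵢ tᵢ(j i)) · ψ(j) = c · ψ(j) for all multi-indices j. In other words, the projective fixed points of the diagonal torus of SU(d₁) × ⋯ × SU(d_N) acting by local phases are exactly the computational basis states. -/

import Mathlib

open scoped BigOperators

/-- A nonzero multipartite state has singleton support (i.e. is a computational basis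
state up to scale) if and only if it is a projective fixed point of the action of the
diagonal torus of `SU(d₁) × ⋯ × SU(d_N)` by local phases. -/
theorem support_singleton_iff_torus_fixed {N : ℕ} {d : Fin N → ℕ} (hd : ∀ i, 1 ≤ d i)
    (ψ : (∀ i, Fin (d i)) → ℂ) (hψ : ψ ≠ 0) :
    (∃ j₀ : ∀ i, Fin (d i), {j | ψ j ≠ 0} = {j₀}) ↔
      ∀ t : ∀ i, Fin (d i) → ℂ,
        (∀ i, ∀ a : Fin (d i), ‖t i a‖ = 1) →
        (∀ i, ∏ a : Fin (d i), t i a = 1) →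
        ∃ c : ℂ, ∀ j : ∀ i, Fin (d i), (∏ i, t i (j i)) * ψ j = c * ψ j := by
  constructor
  · rintro ⟨j₀, hsupp⟩ t _ _
    refine ⟨∏ i, t i (j₀ i), fun j => ?_⟩
    by_cases hj : ψ j = 0
    · simp [hj]
    · have hjj : j = j₀ := by
        have := Set.ext_iff.mp hsupp j
        simpa [hj] using this
      subst hjj; rfl
  · intro h
    obtain ⟨j₀, hj₀⟩ : ∃ j, ψ j ≠ 0 := by
      by_contra hc
      push_neg at hc
      exact hψ (funext fun j => hc j)
    refine ⟨j₀, Set.eq_singleton_iff_unique_mem.mpr ⟨hj₀, fun j hj => ?_⟩⟩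
    by_contra hne
    obtain ⟨i₀, hi₀⟩ : ∃ i, j i ≠ j₀ i := Function.ne_iff.mp hne
    set b₀ := j₀ i₀ with hb₀
    set b₁ := j i₀ with hb₁
    have hbb : b₁ ≠ b₀ := hi₀
    set f : Fin (d i₀) → ℂ :=
      fun a => (if a = b₀ then Complex.I else 1) * (if a = b₁ then -Complex.I else 1) with hf
    set t : ∀ i, Fin (d i) → ℂ :=
      Function.update (fun i (_ : Fin (d i)) => (1 : ℂ)) i₀ f with htdef
    have ht₀ : t i₀ = f := Function.update_self _ _ _
    have htne : ∀ i, i ≠ i₀ → ∀ a, t i a = 1 := by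
      intro i hne' a
      simp [htdef, Function.update_of_ne hne']
    have habs : ∀ i, ∀ a : Fin (d i), ‖t i a‖ = 1 := by
      intro i a
      rcases eq_or_ne i i₀ with rfl | hne'
      · rw [ht₀]
        simp only [hf]
        split_ifs <;> simp
      · rw [htne i hne']; simp
    have hprod : ∀ i, ∏ a : Fin (d i), t i a = 1 := by
      intro i
      rcases eq_or_ne i i₀ with rfl | hne'
      · rw [ht₀]
        simp only [hf]
        rw [Finset.prod_mul_distrib, Finset.prod_ite_eq' Finset.univ b₀ (fun _ => Complex.I),
          Finset.prod_ite_eq' Finset.univ b₁ (fun _ => -Complex.I)]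
        simp [Complex.I_mul_I]
      · simp only [htne i hne']
        simp
    obtain ⟨c, hc⟩ := h t habs hprod
    have key : ∀ j' : ∀ i, Fin (d i), ∏ i, t i (j' i) = f (j' i₀) := by
      intro j'
      refine Finset.prod_eq_single i₀ (fun i _ hne' => htne i hne' _) (by simp) |>.trans ?_
      rw [ht₀]
    have h0 := hc j₀
    have h1 := hc j
    rw [key] at h0 h1
    have hf0 : f (j₀ i₀) = Complex.I := by
      rw [hf]; simp [← hb₀, hbb.symm]
    have hf1 : f (j i₀) = -Complex.I := by
      rw [hf]; simp [← hb₁, hbb]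
    rw [hf0] at h0
    rw [hf1] at h1
    have hcI : c = Complex.I := (mul_right_cancel₀ hj₀ h0).symm
    have hcI' : c = -Complex.I := (mul_right_cancel₀ hj h1).symm
    rw [hcI] at hcI'
    have : (2 : ℂ) * Complex.I = 0 := by linear_combination hcI'
    simp [Complex.I_ne_zero] at this
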